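/- arXiv:1910.12112 — 5 statements merged into one kernel-verified Lean document; each statement's English description precedes it below -/
import Mathlib

section
/- Let a > 0 and let C_a = {f ∈ BV[0,1] : f ≥ 0, Var(f) ≤ a·∫₀¹ f} \ {0}. If f, g ∈ BV[0,1] satisfy -f ⪯ g ⪯ f with respect to the order induced by C_a (i.e., f - g ∈ C_a ∪ {0} and f + g ∈ C_a ∪ {0}), then ‖g‖_{BV} ≤ (2a+1)‖f‖_{BV}, where ‖h‖_{BV} = max{‖h‖₁, Var(h)}. -/
open Set MeasureTheory

/-- The total variation of a function on `[0,1]`. -/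
noncomputable def Var01 (f : ℝ → ℝ) : ℝ :=
  (eVariationOn f (Set.Icc (0:ℝ) 1)).toReal

/-- The `L¹` norm of a function on `[0,1]`. -/
noncomputable def L1norm01 (f : ℝ → ℝ) : ℝ :=
  ∫ x in Set.Icc (0:ℝ) 1, |f x|

/-- The `BV` norm `‖h‖_{BV} = max{‖h‖₁, Var(h)}`. -/
noncomputable def BVnorm01 (f : ℝ → ℝ) : ℝ :=
  max (L1norm01 f) (Var01 f)

/-- Membership in `C_a ∪ {0}`: nonnegative on `[0,1]` with `Var(h) ≤ a ∫₀¹ h`. -/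
def memConeZero (a : ℝ) (h : ℝ → ℝ) : Prop :=
  (∀ x ∈ Set.Icc (0:ℝ) 1, 0 ≤ h x) ∧ Var01 h ≤ a * ∫ x in Set.Icc (0:ℝ) 1, h x

lemma eVar_add_le (u v : ℝ → ℝ) (s : Set ℝ) :
    eVariationOn (u + v) s ≤ eVariationOn u s + eVariationOn v s := by
  apply iSup_le
  rintro ⟨n, ⟨w, hw, ws⟩⟩
  calc ∑ i ∈ Finset.range n, edist ((u + v) (w (i + 1))) ((u + v) (w i))
      ≤ ∑ i ∈ Finset.range n,
        (edist (u (w (i + 1))) (u (w i)) + edist (v (w (i + 1))) (v (w i))) := by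
        apply Finset.sum_le_sum
        intro i _
        exact edist_add_add_le _ _ _ _
    _ = (∑ i ∈ Finset.range n, edist (u (w (i + 1))) (u (w i)))
        + ∑ i ∈ Finset.range n, edist (v (w (i + 1))) (v (w i)) := Finset.sum_add_distrib
    _ ≤ eVariationOn u s + eVariationOn v s :=
        add_le_add (eVariationOn.sum_le (f := u) (n := n) hw ws) (eVariationOn.sum_le (f := v) (n := n) hw ws)

lemma eVar_neg (u : ℝ → ℝ) (s : Set ℝ) :
    eVariationOn (fun x => -(u x)) s = eVariationOn u s := by
  unfold eVariationOn
  congr 1 with p : 1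
  congr 1 with i : 1
  exact edist_neg_neg _ _

/-- If `-f ⪯ g ⪯ f` in the order induced by the cone
`C_a = {f ∈ BV[0,1] : f ≥ 0, Var(f) ≤ a ∫₀¹ f} \ {0}`, then
`‖g‖_{BV} ≤ (2a+1) ‖f‖_{BV}`. -/
theorem cone_adapted_bound (a : ℝ) (ha : 0 < a) (f g : ℝ → ℝ)
    (hf : BoundedVariationOn f (Set.Icc 0 1))
    (hg : BoundedVariationOn g (Set.Icc 0 1))
    (hfi : IntegrableOn f (Set.Icc 0 1))
    (hgi : IntegrableOn g (Set.Icc 0 1))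
    (h₁ : memConeZero a (f + g))   -- `-f ⪯ g`, i.e. `g - (-f) ∈ C_a ∪ {0}`
    (h₂ : memConeZero a (f - g)) : -- `g ⪯ f`, i.e. `f - g ∈ C_a ∪ {0}`
    BVnorm01 g ≤ (2 * a + 1) * BVnorm01 f := by
  -- pointwise facts on [0,1]
  have habs : ∀ x ∈ Set.Icc (0:ℝ) 1, |g x| ≤ f x := by
    intro x hx
    have h1 := h₁.1 x hx
    have h2 := h₂.1 x hx
    simp only [Pi.add_apply, Pi.sub_apply] at h1 h2
    exact abs_le.2 ⟨by linarith, by linarith⟩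
  have hfnn : ∀ x ∈ Set.Icc (0:ℝ) 1, 0 ≤ f x := fun x hx =>
    le_trans (abs_nonneg _) (habs x hx)
  -- ∫ |g| ≤ ∫ f and ∫ f = L1norm01 f
  have hL1 : L1norm01 g ≤ L1norm01 f := by
    have h1 : (∫ x in Set.Icc (0:ℝ) 1, |g x|) ≤ ∫ x in Set.Icc (0:ℝ) 1, f x :=
      setIntegral_mono_on hgi.abs hfi measurableSet_Icc habs
    have h2 : (∫ x in Set.Icc (0:ℝ) 1, f x) = ∫ x in Set.Icc (0:ℝ) 1, |f x| :=
      setIntegral_congr_fun measurableSet_Icc fun x hx => (abs_of_nonneg (hfnn x hx)).symm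
    calc L1norm01 g ≤ ∫ x in Set.Icc (0:ℝ) 1, f x := h1
      _ = L1norm01 f := h2
  have hL1f_nonneg : 0 ≤ L1norm01 f :=
    setIntegral_nonneg measurableSet_Icc fun x _ => abs_nonneg _
  have hBVf_nonneg : 0 ≤ BVnorm01 f := le_trans hL1f_nonneg (le_max_left _ _)
  -- ∫ g ≤ ∫ f
  have hgle : (∫ x in Set.Icc (0:ℝ) 1, g x) ≤ ∫ x in Set.Icc (0:ℝ) 1, f x :=
    setIntegral_mono_on hgi hfi measurableSet_Icc fun x hx => by
      have := h₂.1 x hx; simp only [Pi.sub_apply] at this; linarith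
  have hintf : (∫ x in Set.Icc (0:ℝ) 1, f x) = L1norm01 f :=
    setIntegral_congr_fun measurableSet_Icc fun x hx => (abs_of_nonneg (hfnn x hx)).symm
  -- f + g has bounded variation
  have hfg_bv : BoundedVariationOn (f + g) (Set.Icc 0 1) := by
    intro h
    have := eVar_add_le f g (Set.Icc 0 1)
    rw [h] at this
    exact (ENNReal.add_ne_top.2 ⟨hf, hg⟩) (top_le_iff.1 this)
  -- Var g ≤ Var (f+g) + Var f
  have hvar : Var01 g ≤ Var01 (f + g) + Var01 f := by
    have key : eVariationOn g (Set.Icc (0:ℝ) 1)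
        ≤ eVariationOn (f + g) (Set.Icc (0:ℝ) 1) + eVariationOn f (Set.Icc (0:ℝ) 1) := by
      have h1 : g = (f + g) + (fun x => -(f x)) := by funext x; simp
      calc eVariationOn g (Set.Icc (0:ℝ) 1)
          = eVariationOn ((f + g) + (fun x => -(f x))) (Set.Icc (0:ℝ) 1) := by rw [← h1]
        _ ≤ eVariationOn (f + g) (Set.Icc (0:ℝ) 1)
            + eVariationOn (fun x => -(f x)) (Set.Icc (0:ℝ) 1) := eVar_add_le _ _ _
        _ = eVariationOn (f + g) (Set.Icc (0:ℝ) 1) + eVariationOn f (Set.Icc (0:ℝ) 1) := by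
            rw [eVar_neg]
    have hfin : eVariationOn (f + g) (Set.Icc (0:ℝ) 1) + eVariationOn f (Set.Icc (0:ℝ) 1) ≠ ⊤ :=
      ENNReal.add_ne_top.2 ⟨hfg_bv, hf⟩
    calc Var01 g ≤ (eVariationOn (f + g) (Set.Icc (0:ℝ) 1)
          + eVariationOn f (Set.Icc (0:ℝ) 1)).toReal := ENNReal.toReal_mono hfin key
      _ = Var01 (f + g) + Var01 f := ENNReal.toReal_add hfg_bv hf
  -- Var (f+g) ≤ 2a L1 f
  have hvarfg : Var01 (f + g) ≤ 2 * a * L1norm01 f := by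
    have hint : (∫ x in Set.Icc (0:ℝ) 1, (f + g) x)
        = (∫ x in Set.Icc (0:ℝ) 1, f x) + ∫ x in Set.Icc (0:ℝ) 1, g x := by
      simp only [Pi.add_apply]
      exact integral_add hfi hgi
    calc Var01 (f + g) ≤ a * ∫ x in Set.Icc (0:ℝ) 1, (f + g) x := h₁.2
      _ = a * ((∫ x in Set.Icc (0:ℝ) 1, f x) + ∫ x in Set.Icc (0:ℝ) 1, g x) := by rw [hint]
      _ ≤ a * (2 * ∫ x in Set.Icc (0:ℝ) 1, f x) := by nlinarith
      _ = 2 * a * L1norm01 f := by rw [hintf]; ring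
  -- conclude
  have hVarf_le : Var01 f ≤ BVnorm01 f := le_max_right _ _
  have hL1f_le : L1norm01 f ≤ BVnorm01 f := le_max_left _ _
  have hBV : BVnorm01 g ≤ (2 * a + 1) * BVnorm01 f := by
    apply max_le
    · calc L1norm01 g ≤ L1norm01 f := hL1
        _ ≤ BVnorm01 f := hL1f_le
        _ ≤ (2 * a + 1) * BVnorm01 f := by nlinarith
    · calc Var01 g ≤ Var01 (f + g) + Var01 f := hvar
        _ ≤ 2 * a * L1norm01 f + Var01 f := by linarith
        _ ≤ 2 * a * BVnorm01 f + BVnorm01 f := by nlinarith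
        _ = (2 * a + 1) * BVnorm01 f := by ring
  exact hBV
end

section
/- Let (X, ‖·‖, C) be a real Banach space with a nice D-adapted cone. If f, g ∈ C are comparable (i.e., α(g,f) > 0 and β(g,f) < ∞), then ‖f - ((α(g,f)+β(g,f))/2)·g‖ ≤ (D/2)·‖g‖·α(g,f)·(e^{θ(f,g)} - 1), where θ(f,g) = log(β(g,f)/α(g,f)). -/
/-- The partial order induced by a cone: `x ⪯ y` iff `y - x ∈ C ∪ {0}`. -/
def ConeLE {X : Type*} [AddCommGroup X] (C : Set X) (x y : X) : Prop :=
  y - x ∈ insert (0:X) C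

/-- A nice `D`-adapted cone: convex, closed under positive scalars, blunt,
salient, with `C ∪ {0}` closed, and `D`-adapted. -/
structure IsNiceCone {X : Type*} [NormedAddCommGroup X] [NormedSpace ℝ X]
    (C : Set X) (D : ℝ) : Prop where
  convex : Convex ℝ C
  smul_mem : ∀ c : ℝ, 0 < c → ∀ x ∈ C, c • x ∈ C
  blunt : (0:X) ∉ C
  salient : ∀ x ∈ C, -x ∉ C
  closed : IsClosed (insert (0:X) C)
  one_le : 1 ≤ D
  adapted : ∀ x y : X, ConeLE C (-y) x → ConeLE C x y → ‖x‖ ≤ D * ‖y‖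

/-- `α(v,w) = sup{λ ≥ 0 : λ v ⪯ w}`. -/
noncomputable def coneAlpha {X : Type*} [NormedAddCommGroup X] [NormedSpace ℝ X]
    (C : Set X) (v w : X) : ℝ :=
  sSup {l : ℝ | 0 ≤ l ∧ ConeLE C (l • v) w}


/-- `β(v,w) = inf{μ ≥ 0 : w ⪯ μ v}`. -/
noncomputable def coneBeta {X : Type*} [NormedAddCommGroup X] [NormedSpace ℝ X]
    (C : Set X) (v w : X) : ℝ :=
  sInf {m : ℝ | 0 ≤ m ∧ ConeLE C w (m • v)}

/-- The Hilbert projective metric `θ(v,w) = log (β(v,w) / α(v,w))`. -/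
noncomputable def coneTheta {X : Type*} [NormedAddCommGroup X] [NormedSpace ℝ X]
    (C : Set X) (v w : X) : ℝ :=
  Real.log (coneBeta C v w / coneAlpha C v w)

lemma cone_add_mem {X : Type*} [NormedAddCommGroup X] [NormedSpace ℝ X]
    {C : Set X} {D : ℝ} (hC : IsNiceCone C D) {x y : X}
    (hx : x ∈ insert (0:X) C) (hy : y ∈ insert (0:X) C) :
    x + y ∈ insert (0:X) C := by
  rcases Set.mem_insert_iff.mp hx with rfl | hx
  · simpa using hy
  rcases Set.mem_insert_iff.mp hy with rfl | hy
  · simpa using Set.mem_insert_iff.mpr (Or.inr hx)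
  · refine Set.mem_insert_iff.mpr (Or.inr ?_)
    have hmid := hC.convex hx hy (by norm_num : (0:ℝ) ≤ 1/2)
      (by norm_num : (0:ℝ) ≤ 1/2) (by norm_num)
    have h2 := hC.smul_mem 2 (by norm_num) _ hmid
    have heq : (2:ℝ) • ((1/2:ℝ) • x + (1/2:ℝ) • y) = x + y := by
      rw [smul_add, smul_smul, smul_smul]; norm_num
    rwa [heq] at h2

lemma cone_le_of_sandwich {X : Type*} [NormedAddCommGroup X] [NormedSpace ℝ X]
    {C : Set X} {D : ℝ} (hC : IsNiceCone C D) {g f : X} (hg : g ∈ C) {l m : ℝ}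
    (h1 : ConeLE C (l • g) f) (h2 : ConeLE C f (m • g)) : l ≤ m := by
  by_contra h
  push_neg at h
  have hmem : (m - l) • g ∈ insert (0:X) C := by
    have := cone_add_mem hC h1 h2
    have heq : f - l • g + (m • g - f) = (m - l) • g := by
      rw [sub_smul]; abel
    rwa [heq] at this
  have hpos : (l - m) • g ∈ C := hC.smul_mem _ (by linarith) g hg
  have hneg : (m - l) • g = -((l - m) • g) := by rw [← neg_smul]; ring_nf
  rcases Set.mem_insert_iff.mp hmem with h0 | hc
  · have hz : (l - m) • g = 0 := by
      have := h0; rw [hneg] at this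
      simpa [neg_eq_zero] using this
    exact hC.blunt (hz ▸ hpos)
  · rw [hneg] at hc
    exact hC.salient _ hpos hc

/-- If `f, g` are comparable elements of a nice `D`-adapted cone, then
`‖f - ((α(g,f)+β(g,f))/2) g‖ ≤ (D/2) ‖g‖ α(g,f) (e^{θ(f,g)} - 1)`,
where `θ(f,g) = log(β(g,f)/α(g,f))`. -/
theorem dist_to_midpoint_bound {X : Type*} [NormedAddCommGroup X] [NormedSpace ℝ X]
    [CompleteSpace X] (C : Set X) (D : ℝ) (hC : IsNiceCone C D)
    (f g : X) (hf : f ∈ C) (hg : g ∈ C)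
    (hα : 0 < coneAlpha C g f)
    (hβ : {m : ℝ | 0 ≤ m ∧ ConeLE C f (m • g)}.Nonempty) :
    ‖f - ((coneAlpha C g f + coneBeta C g f) / 2) • g‖ ≤
      D / 2 * ‖g‖ * coneAlpha C g f * (Real.exp (coneTheta C g f) - 1) := by
  set A := coneAlpha C g f with hAdef
  set B := coneBeta C g f with hBdef
  set S := {l : ℝ | 0 ≤ l ∧ ConeLE C (l • g) f} with hSdef
  set T := {m : ℝ | 0 ≤ m ∧ ConeLE C f (m • g)} with hTdef
  have hSne : S.Nonempty := ⟨0, le_refl 0, by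
    simpa [ConeLE] using Set.mem_insert_iff.mpr (Or.inr hf)⟩
  obtain ⟨m0, hm0pos, hm0le⟩ := hβ
  have hSbdd : BddAbove S := ⟨m0, fun l hl => cone_le_of_sandwich hC hg hl.2 hm0le⟩
  have hTbdd : BddBelow T := ⟨0, fun m hm => hm.1⟩
  have hScl : IsClosed S := by
    have : S = Set.Ici (0:ℝ) ∩ (fun l : ℝ => f - l • g) ⁻¹' (insert (0:X) C) := by
      ext l; simp [hSdef, ConeLE, Set.mem_Ici]
    rw [this]
    exact isClosed_Ici.inter (hC.closed.preimage
      (continuous_const.sub (continuous_id.smul continuous_const)))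
  have hTcl : IsClosed T := by
    have : T = Set.Ici (0:ℝ) ∩ (fun m : ℝ => m • g - f) ⁻¹' (insert (0:X) C) := by
      ext m; simp [hTdef, ConeLE, Set.mem_Ici]
    rw [this]
    exact isClosed_Ici.inter (hC.closed.preimage
      ((continuous_id.smul continuous_const).sub continuous_const))
  have hA : A ∈ S := hScl.csSup_mem hSne hSbdd
  have hB : B ∈ T := hTcl.csInf_mem ⟨m0, hm0pos, hm0le⟩ hTbdd
  have hAB : A ≤ B := cone_le_of_sandwich hC hg hA.2 hB.2
  have hBpos : 0 < B := lt_of_lt_of_le hα hAB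
  have hexp : Real.exp (coneTheta C g f) = B / A := by
    rw [coneTheta]
    exact Real.exp_log (div_pos hBpos hα)
  have hx1 : ConeLE C (-(((B - A)/2) • g)) (f - ((A + B)/2) • g) := by
    have heq : f - ((A + B)/2) • g - -(((B - A)/2) • g) = f - A • g := by
      module
    show _ ∈ insert (0:X) C
    rw [ConeLE] at *
    rw [heq]
    exact hA.2
  have hx2 : ConeLE C (f - ((A + B)/2) • g) (((B - A)/2) • g) := by
    have heq : ((B - A)/2) • g - (f - ((A + B)/2) • g) = B • g - f := by
      module
    show _ ∈ insert (0:X) C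
    rw [ConeLE] at *
    rw [heq]
    exact hB.2
  have hbound := hC.adapted _ _ hx1 hx2
  have hnorm : ‖((B - A)/2) • g‖ = (B - A)/2 * ‖g‖ := by
    rw [norm_smul, Real.norm_eq_abs, abs_of_nonneg (by linarith)]
  rw [hnorm] at hbound
  have hRHS : D / 2 * ‖g‖ * A * (Real.exp (coneTheta C g f) - 1)
      = D * ((B - A)/2 * ‖g‖) := by
    rw [hexp]
    field_simp
  rw [hRHS]
  exact hbound
end

section
/- Let (X, ‖·‖, C) be a real Banach space with a nice D-adapted cone, and let f, g ∈ C with ‖f‖ = ‖g‖ = r. Then ‖f - g‖ ≤ D²·r·(e^{θ(f,g)} - 1), where θ is the Hilbert projective metric on C. Consequently, any θ-Cauchy sequence of cone elements of a fixed common norm is Cauchy in norm. -/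
/-- Two cone elements are comparable when `α > 0` and the defining set of `β`
is nonempty (i.e. `β < ∞`). -/
def ConeComparable {X : Type*} [NormedAddCommGroup X] [NormedSpace ℝ X]
    (C : Set X) (v w : X) : Prop :=
  0 < coneAlpha C v w ∧ {m : ℝ | 0 ≤ m ∧ ConeLE C w (m • v)}.Nonempty

section Aux

variable {X : Type*} [NormedAddCommGroup X] [NormedSpace ℝ X]

lemma niceCone_add_mem {C : Set X} {D : ℝ} (hC : IsNiceCone C D) {x y : X}
    (hx : x ∈ insert (0:X) C) (hy : y ∈ insert (0:X) C) : x + y ∈ insert (0:X) C := by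
  rcases Set.mem_insert_iff.mp hx with hx | hx
  · simpa [hx] using hy
  rcases Set.mem_insert_iff.mp hy with hy | hy
  · simpa [hy] using Set.mem_insert_iff.mpr (Or.inr hx)
  · refine Set.mem_insert_iff.mpr (Or.inr ?_)
    have h := hC.convex hx hy (by norm_num : (0:ℝ) ≤ 1/2) (by norm_num : (0:ℝ) ≤ 1/2)
      (by norm_num)
    have h2 := hC.smul_mem 2 (by norm_num) _ h
    have heq : (2:ℝ) • ((1/2 : ℝ) • x + (1/2 : ℝ) • y) = x + y := by module
    rwa [heq] at h2

lemma niceCone_smul_mem {C : Set X} {D : ℝ} (hC : IsNiceCone C D) {l : ℝ} (hl : 0 ≤ l)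
    {x : X} (hx : x ∈ C) : l • x ∈ insert (0:X) C := by
  rcases eq_or_lt_of_le hl with h | h
  · simp [← h]
  · exact Set.mem_insert_iff.mpr (Or.inr (hC.smul_mem l h x hx))

theorem key_bound {C : Set X} {D : ℝ} (hC : IsNiceCone C D)
    {f g : X} (hf : f ∈ C) (hg : g ∈ C) {r : ℝ} (hfr : ‖f‖ = r) (hgr : ‖g‖ = r)
    (hcomp : ConeComparable C f g) :
    ‖f - g‖ ≤ D ^ 2 * r * (Real.exp (coneTheta C f g) - 1) := by
  have hfne : f ≠ 0 := fun h => hC.blunt (h ▸ hf)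
  have hr : 0 < r := hfr ▸ norm_pos_iff.mpr hfne
  have hD : (1:ℝ) ≤ D := hC.one_le
  set Sa : Set ℝ := {l : ℝ | 0 ≤ l ∧ ConeLE C (l • f) g} with hSa
  set Sb : Set ℝ := {m : ℝ | 0 ≤ m ∧ ConeLE C g (m • f)} with hSb
  set a : ℝ := sSup Sa with ha_def
  set b : ℝ := sInf Sb with hb_def
  have hane : Sa.Nonempty := ⟨0, le_refl 0, by
    show g - (0:ℝ) • f ∈ insert (0:X) C
    rw [zero_smul, sub_zero]
    exact Set.mem_insert_iff.mpr (Or.inr hg)⟩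
  have habdd : ∀ l ∈ Sa, l ≤ D := by
    intro l hl
    obtain ⟨hl0, hlle⟩ := hl
    have h1 : ConeLE C (-g) (l • f) := by
      show l • f - -g ∈ insert (0:X) C
      have heq : l • f - -g = l • f + g := by abel
      rw [heq]
      exact niceCone_add_mem hC (niceCone_smul_mem hC hl0 hf)
        (Set.mem_insert_iff.mpr (Or.inr hg))
    have h2 := hC.adapted (l • f) g h1 hlle
    rw [norm_smul, Real.norm_of_nonneg hl0, hfr, hgr] at h2
    exact (mul_le_mul_iff_of_pos_right hr).mp h2
  have haBdd : BddAbove Sa := ⟨D, habdd⟩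
  have hSaClosed : IsClosed Sa := by
    have heq : Sa = {l : ℝ | 0 ≤ l} ∩ (fun l : ℝ => g - l • f) ⁻¹' (insert (0:X) C) := rfl
    rw [heq]
    exact (isClosed_le continuous_const continuous_id).inter
      (hC.closed.preimage (continuous_const.sub (continuous_id.smul continuous_const)))
  have haMem : a ∈ Sa := hSaClosed.csSup_mem hane haBdd
  have hbne : Sb.Nonempty := hcomp.2
  have hbBdd : BddBelow Sb := ⟨0, fun x hx => hx.1⟩
  have hSbClosed : IsClosed Sb := by
    have heq : Sb = {m : ℝ | 0 ≤ m} ∩ (fun m : ℝ => m • f - g) ⁻¹' (insert (0:X) C) := rfl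
    rw [heq]
    exact (isClosed_le continuous_const continuous_id).inter
      (hC.closed.preimage ((continuous_id.smul continuous_const).sub continuous_const))
  have hbMem : b ∈ Sb := hSbClosed.csInf_mem hbne hbBdd
  have ha0 : 0 < a := hcomp.1
  have haD : a ≤ D := habdd a haMem
  have hgaf : g - a • f ∈ insert (0:X) C := haMem.2
  have hbfg : b • f - g ∈ insert (0:X) C := hbMem.2
  have hab : a ≤ b := by
    by_contra hlt
    push_neg at hlt
    have hsum : (g - a • f) + (b • f - g) ∈ insert (0:X) C := niceCone_add_mem hC hgaf hbfg
    have heq : (g - a • f) + (b • f - g) = -((a - b) • f) := by module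
    rw [heq] at hsum
    have habf : (a - b) • f ∈ C := hC.smul_mem (a - b) (by linarith) f hf
    rcases Set.mem_insert_iff.mp hsum with h | h
    · rcases smul_eq_zero.mp (neg_eq_zero.mp h) with h' | h'
      · have := sub_eq_zero.mp h'; linarith
      · exact hfne h'
    · exact hC.salient _ habf h
  have hba : 0 < b := lt_of_lt_of_le ha0 hab
  set c : ℝ := (b - a) / 2 with hc_def
  have hc0 : 0 ≤ c := by rw [hc_def]; linarith
  set m : ℝ := (a + b) / 2 with hm_def
  have hm0 : 0 ≤ m := by rw [hm_def]; linarith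
  have h1a : ConeLE C (-(c • f)) (g - m • f) := by
    show (g - m • f) - -(c • f) ∈ insert (0:X) C
    have heq : (g - m • f) - -(c • f) = g - a • f := by
      rw [hc_def, hm_def]; module
    rw [heq]; exact hgaf
  have h1b : ConeLE C (g - m • f) (c • f) := by
    show c • f - (g - m • f) ∈ insert (0:X) C
    have heq : c • f - (g - m • f) = b • f - g := by
      rw [hc_def, hm_def]; module
    rw [heq]; exact hbfg
  have h1 : ‖g - m • f‖ ≤ D * (c * r) := by
    have h2 := hC.adapted (g - m • f) (c • f) h1a h1b
    rwa [norm_smul, Real.norm_of_nonneg hc0, hfr] at h2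
  have h2 : |m - 1| * r ≤ D * (c * r) := by
    have hmn : ‖m • f‖ = m * r := by rw [norm_smul, Real.norm_of_nonneg hm0, hfr]
    have habs : |m * r - r| ≤ ‖g - m • f‖ := by
      have h3 := abs_norm_sub_norm_le (m • f) g
      rw [hmn, hgr, ← norm_sub_rev] at h3
      exact h3
    have heq : |m * r - r| = |m - 1| * r := by
      rw [show m * r - r = (m - 1) * r by ring, abs_mul, abs_of_nonneg hr.le]
    rw [← heq]
    exact le_trans habs h1
  have hexp : Real.exp (coneTheta C f g) = b / a := by
    have hbeq : coneBeta C f g = b := rfl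
    have haeq : coneAlpha C f g = a := rfl
    rw [coneTheta, hbeq, haeq]
    exact Real.exp_log (div_pos hba ha0)
  have hfinal : D * ((b - a) * r) ≤ D ^ 2 * r * (b / a - 1) := by
    rw [div_sub_one (ne_of_gt ha0), ← mul_div_assoc, le_div_iff₀ ha0]
    nlinarith [mul_nonneg (mul_nonneg (mul_nonneg (by linarith : (0:ℝ) ≤ D)
      (sub_nonneg.2 hab)) hr.le) (sub_nonneg.2 haD)]
  calc ‖f - g‖ = ‖(f - m • f) + (m • f - g)‖ := by abel_nf
    _ ≤ ‖f - m • f‖ + ‖m • f - g‖ := norm_add_le _ _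
    _ = |m - 1| * r + ‖g - m • f‖ := by
        rw [norm_sub_rev (m • f) g]
        congr 1
        have heq : f - m • f = (1 - m) • f := by module
        rw [heq, norm_smul, Real.norm_eq_abs, abs_sub_comm, hfr]
    _ ≤ D * (c * r) + D * (c * r) := add_le_add h2 h1
    _ = D * ((b - a) * r) := by rw [hc_def]; ring
    _ ≤ D ^ 2 * r * (b / a - 1) := hfinal
    _ = D ^ 2 * r * (Real.exp (coneTheta C f g) - 1) := by rw [hexp]

end Aux

/-- For comparable `f, g` in a nice `D`-adapted cone with `‖f‖ = ‖g‖ = r`,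
`‖f - g‖ ≤ D² r (e^{θ(f,g)} - 1)`; consequently, any `θ`-Cauchy sequence of
comparable cone elements of a fixed common norm is Cauchy in norm. -/
theorem norm_sub_le_of_eq_norm {X : Type*} [NormedAddCommGroup X] [NormedSpace ℝ X]
    [CompleteSpace X] (C : Set X) (D : ℝ) (hC : IsNiceCone C D)
    (f g : X) (hf : f ∈ C) (hg : g ∈ C) (r : ℝ) (hfr : ‖f‖ = r) (hgr : ‖g‖ = r)
    (hcomp : ConeComparable C f g) :
    ‖f - g‖ ≤ D ^ 2 * r * (Real.exp (coneTheta C f g) - 1) ∧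
    (∀ (u : ℕ → X) (r' : ℝ), (∀ n, u n ∈ C) → (∀ n, ‖u n‖ = r') →
      (∀ m n, ConeComparable C (u m) (u n)) →
      (∀ ε : ℝ, 0 < ε → ∃ N, ∀ m ≥ N, ∀ n ≥ N, coneTheta C (u m) (u n) < ε) →
      CauchySeq u) := by
  constructor
  · exact key_bound hC hf hg hfr hgr hcomp
  · intro u r' hu hur hcomps hcau
    have hD0 : (0:ℝ) < D := lt_of_lt_of_le one_pos hC.one_le
    have hu0ne : u 0 ≠ 0 := fun h => hC.blunt (h ▸ hu 0)
    have hr' : 0 < r' := (hur 0) ▸ norm_pos_iff.mpr hu0ne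
    rw [Metric.cauchySeq_iff]
    intro ε hε
    have hpos : 0 < D ^ 2 * r' := mul_pos (pow_pos hD0 2) hr'
    have hdivpos : 0 < ε / (D ^ 2 * r') := div_pos hε hpos
    set ε' : ℝ := Real.log (1 + ε / (D ^ 2 * r')) with hε'_def
    have hε'pos : 0 < ε' := Real.log_pos (by linarith)
    obtain ⟨N, hN⟩ := hcau ε' hε'pos
    refine ⟨N, fun n hn m hm => ?_⟩
    rw [dist_eq_norm]
    have hkey := key_bound hC (hu n) (hu m) (hur n) (hur m) (hcomps n m)
    have hθ := hN n hn m hm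
    calc ‖u n - u m‖ ≤ D ^ 2 * r' * (Real.exp (coneTheta C (u n) (u m)) - 1) := hkey
      _ < D ^ 2 * r' * (Real.exp ε' - 1) := by
          apply mul_lt_mul_of_pos_left _ hpos
          exact sub_lt_sub_right (Real.exp_lt_exp.mpr hθ) 1
      _ = ε := by
          rw [hε'_def, Real.exp_log (by linarith)]
          field_simp
          ring
end

section
/- Let (Ω, B, μ, σ) be an ergodic probability-preserving transformation, N : Ω → ℤ_{≥1} with N(σⁿ(ω))/n → 0 μ-a.e., and h : Ω → ℝ measurable with (1/n)·∑_{i=0}^{n-1} h(σⁱ(ω)) → λ ∈ ℝ for μ-a.e. ω. Then (1/n)·∑_{i=0}^{N(σⁿ(ω))-1} h(σ^{i+n}(ω)) → 0 for μ-a.e. ω. -/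
open MeasureTheory Filter

/-- If `N(σⁿ(ω))/n → 0` a.e. and the Birkhoff averages of `h` converge a.e. to a
finite constant `lam`, then `(1/n) ∑_{i=0}^{N(σⁿ(ω))-1} h(σ^{i+n}(ω)) → 0` a.e. -/
theorem birkhoff_tail_sum_tendsto_zero {Ω : Type*} [MeasurableSpace Ω]
    (μ : Measure Ω) [IsProbabilityMeasure μ] (σ : Ω → Ω) (hσ : Ergodic σ μ)
    (N : Ω → ℕ) (hN1 : ∀ ω, 1 ≤ N ω)
    (hNsub : ∀ᵐ ω ∂μ, Tendsto (fun n : ℕ => (N (σ^[n] ω) : ℝ) / n) atTop (nhds 0))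
    (h : Ω → ℝ) (hmeas : Measurable h) (lam : ℝ)
    (hBirk : ∀ᵐ ω ∂μ, Tendsto
      (fun n : ℕ => (∑ i ∈ Finset.range n, h (σ^[i] ω)) / n) atTop (nhds lam)) :
    ∀ᵐ ω ∂μ, Tendsto
      (fun n : ℕ => (∑ i ∈ Finset.range (N (σ^[n] ω)), h (σ^[i + n] ω)) / n)
      atTop (nhds 0) := by
  filter_upwards [hNsub, hBirk] with ω hN hB
  set S : ℕ → ℝ := fun k => ∑ i ∈ Finset.range k, h (σ^[i] ω) with hS
  have hbpos : ∀ n : ℕ, (0 : ℝ) < (n : ℝ) + N (σ^[n] ω) := by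
    intro n
    have h1 : (1 : ℝ) ≤ (N (σ^[n] ω) : ℝ) := by exact_mod_cast hN1 (σ^[n] ω)
    have h2 : (0 : ℝ) ≤ (n : ℝ) := Nat.cast_nonneg n
    linarith
  have key : ∀ n : ℕ, (∑ i ∈ Finset.range (N (σ^[n] ω)), h (σ^[i + n] ω))
      = S (n + N (σ^[n] ω)) - S n := by
    intro n
    have := Finset.sum_range_add (fun i => h (σ^[i] ω)) n (N (σ^[n] ω))
    simp only [hS]
    rw [this]
    have : ∀ i, h (σ^[i + n] ω) = h (σ^[n + i] ω) := fun i => by rw [Nat.add_comm]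
    simp only [this]
    ring
  have hmono : Tendsto (fun n : ℕ => n + N (σ^[n] ω)) atTop atTop :=
    tendsto_atTop_mono (fun n => Nat.le_add_right n _) tendsto_id
  have h2 : Tendsto (fun n : ℕ => S (n + N (σ^[n] ω)) / ((n : ℝ) + N (σ^[n] ω)))
      atTop (nhds lam) := by
    refine (hB.comp hmono).congr fun n => ?_
    simp only [Function.comp_apply, hS, Nat.cast_add]
  have h1 : Tendsto (fun n : ℕ => ((n : ℝ) + N (σ^[n] ω)) / n) atTop (nhds 1) := by
    have htend : Tendsto (fun n : ℕ => 1 + (N (σ^[n] ω) : ℝ) / n) atTop (nhds (1 + 0)) :=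
      tendsto_const_nhds.add hN
    rw [add_zero] at htend
    refine htend.congr' ?_
    filter_upwards [eventually_ge_atTop 1] with n hn
    have hn' : (n : ℝ) ≠ 0 := by positivity
    field_simp
  have h3 : Tendsto (fun n : ℕ => S (n + N (σ^[n] ω)) / (n : ℝ)) atTop (nhds (lam * 1)) := by
    refine (h2.mul h1).congr fun n => ?_
    rw [div_mul_div_cancel₀ (hbpos n).ne']
  have h4 : Tendsto (fun n : ℕ => S (n + N (σ^[n] ω)) / (n : ℝ) - S n / n)
      atTop (nhds (lam * 1 - lam)) := h3.sub hB
  have : lam * 1 - lam = 0 := by ring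
  rw [this] at h4
  refine h4.congr fun n => ?_
  rw [key n, sub_div]
end

section
/- Let (Ω, B, μ, σ) be an ergodic probability-preserving transformation and f : Ω → [0, ∞) measurable. If the Birkhoff averages (1/n)·∑_{i=0}^{n-1} f(σⁱ(ω)) converge to a finite constant λ for μ-almost every ω, then f is integrable. -/
open MeasureTheory Filter
open scoped Topology
set_option maxHeartbeats 1000000
set_option synthInstance.maxHeartbeats 400000

/-- Auxiliary: the integral of each truncation `min f N` is at most `lam`. -/
theorem truncation_integral_le {Ω : Type*} [MeasurableSpace Ω]
    (μ : Measure Ω) [IsProbabilityMeasure μ] (σ : Ω → Ω) (hσ : Ergodic σ μ)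
    (f : Ω → ℝ) (hmeas : Measurable f) (hnonneg : ∀ ω, 0 ≤ f ω) (lam : ℝ)
    (hBirk : ∀ᵐ ω ∂μ, Tendsto
      (fun n : ℕ => (∑ i ∈ Finset.range n, f (σ^[i] ω)) / n) atTop (nhds lam))
    (N : ℕ) : ∫ ω, min (f ω) N ∂μ ≤ lam := by
  have hσm : MeasurePreserving σ μ μ := hσ.toMeasurePreserving
  set g : Ω → ℝ := fun ω => min (f ω) N with hg_def
  have hg_meas : Measurable g := hmeas.min measurable_const
  have hg_nonneg : ∀ ω, 0 ≤ g ω := fun ω => le_min (hnonneg ω) (N.cast_nonneg)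
  have hg_le_N : ∀ ω, g ω ≤ N := fun ω => min_le_right _ _
  have hg_le_f : ∀ ω, g ω ≤ f ω := fun ω => min_le_left _ _
  have hg_mem : MemLp g 2 μ := by
    refine MemLp.of_bound hg_meas.aestronglyMeasurable (N : ℝ)
      (Filter.Eventually.of_forall fun ω => ?_)
    rw [Real.norm_eq_abs, abs_of_nonneg (hg_nonneg ω)]
    exact hg_le_N ω
  set G : Lp ℝ 2 μ := hg_mem.toLp g with hG_def
  set T : Lp ℝ 2 μ →L[ℝ] Lp ℝ 2 μ :=
    (Lp.compMeasurePreservingₗᵢ ℝ σ hσm).toContinuousLinearMap with hT_def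
  have hT_norm : ‖T‖ ≤ 1 := LinearIsometry.norm_toContinuousLinearMap_le _
  -- identify the iterates of the Koopman operator
  have hiter : ∀ i : ℕ, ⇑((⇑T)^[i] G) =ᵐ[μ] fun ω => g (σ^[i] ω) := by
    intro i
    induction i with
    | zero => simpa using hg_mem.coeFn_toLp
    | succ i ih =>
      rw [Function.iterate_succ_apply']
      have h1 : ⇑(T ((⇑T)^[i] G)) =ᵐ[μ] ⇑((⇑T)^[i] G) ∘ σ :=
        Lp.coeFn_compMeasurePreserving ((⇑T)^[i] G) hσm
      have h2 : ⇑((⇑T)^[i] G) ∘ σ =ᵐ[μ] (fun ω => g (σ^[i] ω)) ∘ σ := by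
        refine ae_eq_comp hσm.measurable.aemeasurable ?_
        rwa [hσm.map_eq]
      refine (h1.trans h2).trans (Filter.Eventually.of_forall fun ω => ?_)
      simp [Function.comp, Function.iterate_succ_apply]
  -- identify the Birkhoff averages
  have hcoe : ∀ n : ℕ, ⇑(birkhoffAverage ℝ (⇑T) _root_.id n G) =ᵐ[μ]
      fun ω => (n : ℝ)⁻¹ * ∑ i ∈ Finset.range n, g (σ^[i] ω) := by
    intro n
    have hsum : ⇑(∑ i ∈ Finset.range n, (⇑T)^[i] G) =ᵐ[μ]
        fun ω => ∑ i ∈ Finset.range n, g (σ^[i] ω) := by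
      induction n with
      | zero =>
        simp only [Finset.range_zero, Finset.sum_empty]
        exact Lp.coeFn_zero (E := ℝ) (p := 2) (μ := μ)
      | succ n ih =>
        rw [Finset.sum_range_succ]
        refine (Lp.coeFn_add _ _).trans ?_
        filter_upwards [ih, hiter n] with ω h1 h2
        rw [Pi.add_apply, h1, h2, Finset.sum_range_succ]
    have : birkhoffAverage ℝ (⇑T) _root_.id n G
        = (n : ℝ)⁻¹ • ∑ i ∈ Finset.range n, (⇑T)^[i] G := by
      simp [birkhoffAverage, birkhoffSum]
    rw [this]
    refine (Lp.coeFn_smul _ _).trans ?_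
    filter_upwards [hsum] with ω h
    rw [Pi.smul_apply, h, smul_eq_mul]
  -- von Neumann mean ergodic theorem
  obtain ⟨P, htend⟩ : ∃ P : Lp ℝ 2 μ,
      Tendsto (birkhoffAverage ℝ (⇑T) _root_.id · G) atTop (𝓝 P) :=
    ⟨_, T.tendsto_birkhoffAverage_orthogonalProjection hT_norm G⟩
  -- extract an a.e. convergent subsequence
  obtain ⟨ns, hns_mono, hae⟩ :=
    (tendstoInMeasure_of_tendsto_Lp (μ := μ) htend).exists_seq_tendsto_ae
  have hcoe_all : ∀ᵐ ω ∂μ, ∀ n : ℕ, (birkhoffAverage ℝ (⇑T) _root_.id n G) ω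
      = (n : ℝ)⁻¹ * ∑ i ∈ Finset.range n, g (σ^[i] ω) := ae_all_iff.mpr hcoe
  have h1 : ∀ᵐ ω ∂μ, Tendsto
      (fun k : ℕ => ((ns k : ℝ))⁻¹ * ∑ i ∈ Finset.range (ns k), g (σ^[i] ω)) atTop
      (𝓝 (P ω)) := by
    filter_upwards [hae, hcoe_all] with ω hω hcω
    refine hω.congr fun k => ?_
    exact hcω (ns k)
  -- the a.e. limit is at most lam
  have hP_le : ∀ᵐ ω ∂μ, P ω ≤ lam := by
    filter_upwards [h1, hBirk] with ω hω hfω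
    refine le_of_tendsto_of_tendsto hω
      (hfω.comp (hns_mono.tendsto_atTop)) (Filter.Eventually.of_forall fun k => ?_)
    have hsum_le : ∑ i ∈ Finset.range (ns k), g (σ^[i] ω)
        ≤ ∑ i ∈ Finset.range (ns k), f (σ^[i] ω) :=
      Finset.sum_le_sum fun i _ => hg_le_f _
    calc ((ns k : ℝ))⁻¹ * ∑ i ∈ Finset.range (ns k), g (σ^[i] ω)
        ≤ ((ns k : ℝ))⁻¹ * ∑ i ∈ Finset.range (ns k), f (σ^[i] ω) :=
          mul_le_mul_of_nonneg_left hsum_le (by positivity)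
      _ = (∑ i ∈ Finset.range (ns k), f (σ^[i] ω)) / (ns k : ℝ) := by
          rw [div_eq_inv_mul]
  -- integrability facts
  have hg_int : Integrable g μ := hg_mem.integrable one_le_two
  have hg_comp_int : ∀ i : ℕ, Integrable (fun ω => g (σ^[i] ω)) μ := by
    intro i
    exact (hg_mem.comp_measurePreserving (hσm.iterate i)).integrable one_le_two
  have hg_comp_integral : ∀ i : ℕ, ∫ ω, g (σ^[i] ω) ∂μ = ∫ ω, g ω ∂μ := by
    intro i
    rw [← (hσm.iterate i).map_eq, integral_map (hσm.iterate i).measurable.aemeasurable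
      hg_meas.aestronglyMeasurable, (hσm.iterate i).map_eq]
  -- integral of the Birkhoff average of g equals ∫ g (for n ≥ 1)
  have h_int_avg : ∀ n : ℕ, 1 ≤ n →
      ∫ ω, (n : ℝ)⁻¹ * ∑ i ∈ Finset.range n, g (σ^[i] ω) ∂μ = ∫ ω, g ω ∂μ := by
    intro n hn
    rw [integral_const_mul, integral_finset_sum _ fun i _ => hg_comp_int i]
    simp only [hg_comp_integral]
    rw [Finset.sum_const, Finset.card_range, nsmul_eq_mul, ← mul_assoc,
      inv_mul_cancel₀ (by exact_mod_cast Nat.one_le_iff_ne_zero.mp hn : (n : ℝ) ≠ 0), one_mul]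
  -- dominated convergence along the subsequence
  have hdom : Tendsto
      (fun k : ℕ => ∫ ω, ((ns k : ℝ))⁻¹ * ∑ i ∈ Finset.range (ns k), g (σ^[i] ω) ∂μ)
      atTop (𝓝 (∫ ω, P ω ∂μ)) := by
    refine tendsto_integral_of_dominated_convergence (fun _ => (N : ℝ)) ?_ ?_ ?_ h1
    · intro k
      exact ((Finset.range (ns k)).measurable_sum fun i _ =>
        hg_meas.comp (hσm.iterate i).measurable).const_mul _ |>.aestronglyMeasurable
    · exact integrable_const _
    · intro k
      refine Filter.Eventually.of_forall fun ω => ?_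
      have h0 : (0 : ℝ) ≤ ((ns k : ℝ))⁻¹ * ∑ i ∈ Finset.range (ns k), g (σ^[i] ω) := by
        have : (0 : ℝ) ≤ ∑ i ∈ Finset.range (ns k), g (σ^[i] ω) :=
          Finset.sum_nonneg fun i _ => hg_nonneg _
        positivity
      rw [Real.norm_eq_abs, abs_of_nonneg h0]
      calc ((ns k : ℝ))⁻¹ * ∑ i ∈ Finset.range (ns k), g (σ^[i] ω)
          ≤ ((ns k : ℝ))⁻¹ * ∑ i ∈ Finset.range (ns k), (N : ℝ) :=
            mul_le_mul_of_nonneg_left (Finset.sum_le_sum fun i _ => hg_le_N _) (by positivity)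
        _ ≤ (N : ℝ) := by
            rcases Nat.eq_zero_or_pos (ns k) with h | h
            · simp [h]
            · rw [Finset.sum_const, Finset.card_range, nsmul_eq_mul, ← mul_assoc,
                inv_mul_cancel₀ (by exact_mod_cast h.ne' : ((ns k : ℝ)) ≠ 0), one_mul]
  -- conclude ∫ g = ∫ P ≤ lam
  have h_eq : ∫ ω, g ω ∂μ = ∫ ω, P ω ∂μ := by
    refine tendsto_nhds_unique ?_ hdom
    refine (tendsto_const_nhds).congr' ?_
    filter_upwards [eventually_ge_atTop 1] with k hk
    exact (h_int_avg (ns k) (le_trans hk (hns_mono.le_apply))).symm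
  have hP_int : Integrable (⇑P) μ := ((Lp.memLp P).mono_exponent one_le_two).integrable
    le_rfl
  calc ∫ ω, g ω ∂μ = ∫ ω, P ω ∂μ := h_eq
    _ ≤ ∫ _ω, lam ∂μ := integral_mono_ae hP_int (integrable_const _) hP_le
    _ = lam := by simp

/-- If `f ≥ 0` is measurable and its Birkhoff averages under an ergodic
probability-preserving transformation converge a.e. to a finite constant,
then `f` is integrable. -/
theorem integrable_of_birkhoff_avg_tendsto {Ω : Type*} [MeasurableSpace Ω]
    (μ : Measure Ω) [IsProbabilityMeasure μ] (σ : Ω → Ω) (hσ : Ergodic σ μ)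
    (f : Ω → ℝ) (hmeas : Measurable f) (hnonneg : ∀ ω, 0 ≤ f ω) (lam : ℝ)
    (hBirk : ∀ᵐ ω ∂μ, Tendsto
      (fun n : ℕ => (∑ i ∈ Finset.range n, f (σ^[i] ω)) / n) atTop (nhds lam)) :
    Integrable f μ := by
  have key : ∀ N : ℕ, ∫ ω, min (f ω) N ∂μ ≤ lam :=
    truncation_integral_le μ σ hσ f hmeas hnonneg lam hBirk
  have hlam0 : 0 ≤ lam := by
    have h0 : ∫ ω, min (f ω) ((0 : ℕ) : ℝ) ∂μ = 0 := by
      rw [show (fun ω => min (f ω) ((0 : ℕ) : ℝ)) = fun _ => (0 : ℝ) from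
        funext fun ω => by simp [min_eq_right (hnonneg ω)]]
      simp
    linarith [key 0, h0]
  refine ⟨hmeas.aestronglyMeasurable, ?_⟩
  rw [hasFiniteIntegral_iff_ofReal (Filter.Eventually.of_forall hnonneg)]
  have h_mc : ∫⁻ ω, ENNReal.ofReal (f ω) ∂μ
      = ⨆ N : ℕ, ∫⁻ ω, ENNReal.ofReal (min (f ω) N) ∂μ := by
    rw [← lintegral_iSup]
    · refine lintegral_congr fun ω => ?_
      refine le_antisymm ?_ (iSup_le fun N => ENNReal.ofReal_le_ofReal (min_le_left _ _))
      refine le_iSup_of_le ⌈f ω⌉₊ ?_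
      rw [min_eq_left (Nat.le_ceil _)]
    · exact fun N => (hmeas.min measurable_const).ennreal_ofReal
    · intro m n hmn ω
      exact ENNReal.ofReal_le_ofReal (le_min (min_le_left _ _)
        ((min_le_right _ _).trans (by exact_mod_cast Nat.cast_le.mpr hmn)))
  rw [h_mc]
  have hle : (⨆ N : ℕ, ∫⁻ ω, ENNReal.ofReal (min (f ω) N) ∂μ) ≤ ENNReal.ofReal lam := by
    refine iSup_le fun N => ?_
    have hint : Integrable (fun ω => min (f ω) N) μ := by
      refine Integrable.mono' (integrable_const (N : ℝ))
        (hmeas.min measurable_const).aestronglyMeasurable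
        (Filter.Eventually.of_forall fun ω => ?_)
      rw [Real.norm_eq_abs, abs_of_nonneg (le_min (hnonneg ω) N.cast_nonneg)]
      exact min_le_right _ _
    rw [← ofReal_integral_eq_lintegral_ofReal hint
      (Filter.Eventually.of_forall fun ω => le_min (hnonneg ω) N.cast_nonneg)]
    exact ENNReal.ofReal_le_ofReal (key N)
  exact lt_of_le_of_lt hle ENNReal.ofReal_lt_top
end
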